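/- Let Ω ⊂ ℂⁿ be a bounded domain, z ∈ Ω, X a holomorphic tangent vector, and S_{z,X} = {f ∈ A²(Ω) : f(z)=0, Xf(z)=0}. Then the orthogonal complement of S_{z,X} in A²(Ω) has complex dimension 2, and {b_z, h₁} is an orthonormal basis of it, where b_z = K_Ω(·,z)/√K_Ω(z) and h₁ = P_{z,X}(b_z c_{z,X})/‖P_{z,X}(b_z c_{z,X})‖_{L²(Ω)}. -/

import Mathlib

open MeasureTheory Complex ComplexConjugate Metric

noncomputable section

abbrev Cn (n : ℕ) := EuclideanSpace ℂ (Fin n)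

instance {n : ℕ} : MeasurableSpace (Cn n) := WithLp.measurableSpace 2 (Fin n → ℂ)
instance {n : ℕ} : BorelSpace (Cn n) := PiLp.borelSpace 2
instance {n : ℕ} : MeasureSpace (Cn n) := ⟨(volume : Measure (Fin n → ℂ)).map (WithLp.toLp 2)⟩

/-- Membership in the Bergman space `A²(Ω)`: holomorphic on `Ω` and square-integrable. -/
def A2mem {n : ℕ} (Ω : Set (Cn n)) (f : Cn n → ℂ) : Prop :=
  DifferentiableOn ℂ f Ω ∧ MeasureTheory.MemLp f 2 (volume.restrict Ω)

/-- The `L²(Ω)` norm of a function. -/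
def L2norm {n : ℕ} (Ω : Set (Cn n)) (f : Cn n → ℂ) : ℝ :=
  Real.sqrt (∫ ζ in Ω, ‖f ζ‖ ^ 2)

/-- `K` is the Bergman kernel of `Ω`: for each `z ∈ Ω`, `K (·, z) ∈ A²(Ω)` and `K`
has the reproducing property. -/
def IsBergmanKernel {n : ℕ} (Ω : Set (Cn n)) (K : Cn n → Cn n → ℂ) : Prop :=
  (∀ z ∈ Ω, A2mem Ω (fun ζ => K ζ z)) ∧
  (∀ f, A2mem Ω f → ∀ z ∈ Ω, f z = ∫ ζ in Ω, f ζ * conj (K ζ z))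

/-- The normalized Bergman kernel `b_z = K(·,z)/√K(z,z)`. -/
def bz {n : ℕ} (K : Cn n → Cn n → ℂ) (z ζ : Cn n) : ℂ :=
  K ζ z / (Real.sqrt (K z z).re : ℂ)

/-- `X̄_z K(ζ,z) = Σ_j conj X_j ∂K(ζ,z)/∂z̄_j`, computed as the conjugate of the
complex directional derivative of the holomorphic function `w ↦ conj (K ζ w)`. -/
def barDeriv {n : ℕ} (K : Cn n → Cn n → ℂ) (X z ζ : Cn n) : ℂ :=
  conj (fderiv ℂ (fun w => conj (K ζ w)) z X)

/-- The Bergman metric `B_Ω(z;X)`. -/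
def BergmanMetric {n : ℕ} (Ω : Set (Cn n)) (K : Cn n → Cn n → ℂ) (z X : Cn n) : ℝ :=
  (Real.sqrt (K z z).re)⁻¹ *
    sSup {r | ∃ f : Cn n → ℂ, DifferentiableOn ℂ f Ω ∧ f z = 0 ∧
      (∫ ζ in Ω, ‖f ζ‖ ^ 2) ≤ 1 ∧ r = ‖fderiv ℂ f z X‖}

/-- The Carathéodory metric `C_Ω(z;X)`. -/
def CaraMetric {n : ℕ} (Ω : Set (Cn n)) (z X : Cn n) : ℝ :=
  sSup {r | ∃ f : Cn n → ℂ, DifferentiableOn ℂ f Ω ∧ f z = 0 ∧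
      (∀ ζ ∈ Ω, ‖f ζ‖ < 1) ∧ r = ‖fderiv ℂ f z X‖}

/-- A Carathéodory extremal function `c_{z,X}`. -/
def IsCaraExtremal {n : ℕ} (Ω : Set (Cn n)) (z X : Cn n) (c : Cn n → ℂ) : Prop :=
  DifferentiableOn ℂ c Ω ∧ c z = 0 ∧ (∀ ζ ∈ Ω, ‖c ζ‖ < 1) ∧
    fderiv ℂ c z X = (CaraMetric Ω z X : ℂ)

/-- The subspace `S_{z,X} = {f ∈ A²(Ω) : f(z)=0, Xf(z)=0}`. -/
def SzX {n : ℕ} (Ω : Set (Cn n)) (z X : Cn n) (f : Cn n → ℂ) : Prop :=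
  A2mem Ω f ∧ f z = 0 ∧ fderiv ℂ f z X = 0

/-- `p = P_{z,X} g`: the orthogonal projection of `g` onto `S_{z,X}^⊥`,
characterized by `p ∈ A²(Ω)`, `p ⊥ S_{z,X}` and `g - p ∈ S_{z,X}`. -/
def IsProj {n : ℕ} (Ω : Set (Cn n)) (z X : Cn n) (g p : Cn n → ℂ) : Prop :=
  A2mem Ω p ∧ (∀ h, SzX Ω z X h → (∫ ζ in Ω, h ζ * conj (p ζ)) = 0) ∧
    SzX Ω z X (g - p)

/-- The (unit-norm) Bergman extremal function `b_{z,X}` with `X b_{z,X}(z) > 0`. -/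
def IsBergmanExtremal {n : ℕ} (Ω : Set (Cn n)) (K : Cn n → Cn n → ℂ) (z X : Cn n)
    (b : Cn n → ℂ) : Prop :=
  A2mem Ω b ∧ b z = 0 ∧ L2norm Ω b = 1 ∧
    fderiv ℂ b z X = ((Real.sqrt (K z z).re * BergmanMetric Ω K z X : ℝ) : ℂ) ∧
    ∀ f : Cn n → ℂ, DifferentiableOn ℂ f Ω → f z = 0 → (∫ ζ in Ω, ‖f ζ‖ ^ 2) ≤ 1 →
      ‖fderiv ℂ f z X‖ ≤ Real.sqrt (K z z).re * BergmanMetric Ω K z X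


-- ===================== auxiliary lemmas =====================

instance {n : ℕ} : Measure.IsOpenPosMeasure (volume : Measure (Cn n)) :=
  (PiLp.homeomorph 2 (fun _ : Fin n => ℂ)).symm.continuous.isOpenPosMeasure_map
    (PiLp.homeomorph 2 (fun _ : Fin n => ℂ)).symm.surjective

instance {n : ℕ} : IsFiniteMeasureOnCompacts (volume : Measure (Cn n)) :=
  Measure.IsFiniteMeasureOnCompacts.map (volume : Measure (Fin n → ℂ))
    (PiLp.homeomorph 2 (fun _ : Fin n => ℂ)).symm

lemma integrable_mul_conj {n : ℕ} {μ : Measure (Cn n)} {f g : Cn n → ℂ}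
    (hf : MemLp f 2 μ) (hg : MemLp g 2 μ) :
    Integrable (fun ζ => f ζ * conj (g ζ)) μ := by
  have h := MeasureTheory.L2.integrable_inner (𝕜 := ℂ) (hg.toLp g) (hf.toLp f)
  refine h.congr ?_
  filter_upwards [hg.coeFn_toLp, hf.coeFn_toLp] with x h2 h3
  simp [h2, h3, RCLike.inner_apply, mul_comm]

lemma integral_conj_swap {α : Type*} [MeasurableSpace α] (μ : Measure α) (u v : α → ℂ) :
    ∫ x, u x * conj (v x) ∂μ = conj (∫ x, v x * conj (u x) ∂μ) := by
  rw [← integral_conj]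
  congr 1
  funext x
  simp only [map_mul, Complex.conj_conj]
  ring

lemma zero_on_of_integral_zero {n : ℕ} {Ω : Set (Cn n)} (hΩo : IsOpen Ω)
    {f : Cn n → ℂ} (hf : A2mem Ω f) (h : (∫ ζ in Ω, ‖f ζ‖ ^ 2) = 0) :
    ∀ ζ ∈ Ω, f ζ = 0 := by
  have hint : Integrable (fun ζ => ‖f ζ‖ ^ 2) (volume.restrict Ω) :=
    (memLp_two_iff_integrable_sq_norm hf.2.1).mp hf.2
  have hae : (fun ζ => ‖f ζ‖ ^ 2) =ᵐ[volume.restrict Ω] 0 :=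
    (integral_eq_zero_iff_of_nonneg (fun x => by positivity) hint).mp h
  have hae' : f =ᵐ[volume.restrict Ω] 0 := by
    filter_upwards [hae] with x hx
    have hx' : ‖f x‖ ^ 2 = 0 := hx
    have : ‖f x‖ = 0 := by nlinarith [norm_nonneg (f x)]
    simpa using this
  intro ζ hζ
  by_contra hne
  have hcont : ContinuousAt f ζ :=
    (hf.1.differentiableAt (hΩo.mem_nhds hζ)).continuousAt
  have hev : ∀ᶠ y in nhds ζ, f y ≠ 0 := hcont.eventually_ne hne
  obtain ⟨t, htsub, hto, hζt⟩ := _root_.eventually_nhds_iff.mp hev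
  have h0 : volume.restrict Ω (t ∩ Ω) = 0 := by
    refine measure_mono_null (fun x hx => ?_) (ae_iff.mp hae')
    exact htsub x hx.1
  rw [Measure.restrict_apply ((hto.inter hΩo).measurableSet)] at h0
  have heq : (t ∩ Ω) ∩ Ω = t ∩ Ω := by simp [Set.inter_assoc]
  rw [heq] at h0
  exact ((hto.inter hΩo).measure_ne_zero volume ⟨ζ, hζt, hζ⟩) h0

lemma coord_le_norm {n : ℕ} (x : Cn n) (j : Fin n) : ‖x j‖ ≤ ‖x‖ := by
  have h := PiLp.norm_sq_eq_of_L2 (fun _ : Fin n => ℂ) x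
  have h2 : ‖x j‖ ^ 2 ≤ ‖x‖ ^ 2 := by
    rw [h]
    exact Finset.single_le_sum (f := fun i => ‖x i‖ ^ 2) (fun i _ => by positivity)
      (Finset.mem_univ j)
  nlinarith [norm_nonneg x, norm_nonneg (x j)]

lemma cara_pos {n : ℕ} {Ω : Set (Cn n)} (hΩo : IsOpen Ω) (hΩb : Bornology.IsBounded Ω)
    {z : Cn n} (hz : z ∈ Ω) {X : Cn n} (hX : X ≠ 0) : 0 < CaraMetric Ω z X := by
  have hXn : 0 < ‖X‖ := norm_pos_iff.mpr hX
  obtain ⟨r, hr, hball⟩ := Metric.isOpen_iff.mp hΩo z hz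
  have hbdd : BddAbove {r' | ∃ f : Cn n → ℂ, DifferentiableOn ℂ f Ω ∧ f z = 0 ∧
      (∀ ζ ∈ Ω, ‖f ζ‖ < 1) ∧ r' = ‖fderiv ℂ f z X‖} := by
    refine ⟨‖X‖ / r, ?_⟩
    rintro r' ⟨f, hfd, hf0, hfb, rfl⟩
    set g : ℂ → ℂ := fun t => f (z + t • X) with hg
    have hmem : ∀ t : ℂ, t ∈ ball (0:ℂ) (r / ‖X‖) → z + t • X ∈ Ω := by
      intro t ht
      apply hball
      rw [mem_ball] at ht ⊢
      rw [dist_eq_norm] at ht ⊢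
      simp only [add_sub_cancel_left, norm_smul]
      calc ‖t‖ * ‖X‖ < (r / ‖X‖) * ‖X‖ := by
            apply mul_lt_mul_of_pos_right _ hXn
            simpa using ht
        _ = r := by field_simp
    have hgd : DifferentiableOn ℂ g (ball (0:ℂ) (r / ‖X‖)) := by
      intro t ht
      have h1 : DifferentiableAt ℂ f (z + t • X) :=
        hfd.differentiableAt (hΩo.mem_nhds (hmem t ht))
      have h2 : DifferentiableAt ℂ (fun t : ℂ => z + t • X) t :=
        (differentiable_id.smul_const X).const_add z |>.differentiableAt
      exact (h1.comp t h2).differentiableWithinAt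
    have hg0 : g 0 = 0 := by simp [hg, hf0]
    have hmaps : Set.MapsTo g (ball (0:ℂ) (r / ‖X‖)) (ball (g 0) 1) := by
      intro t ht
      rw [hg0, mem_ball_zero_iff]
      exact hfb _ (hmem t ht)
    have hder : HasDerivAt g (fderiv ℂ f z X) 0 := by
      have hL : HasDerivAt (fun t : ℂ => z + t • X) X 0 := by
        simpa using ((hasDerivAt_id (0:ℂ)).smul_const X).const_add z
      have hf' : HasFDerivAt f (fderiv ℂ f z) (z + (0:ℂ) • X) := by
        simpa using (hfd.differentiableAt (hΩo.mem_nhds hz)).hasFDerivAt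
      exact hf'.comp_hasDerivAt 0 hL
    have hs := Complex.norm_deriv_le_div_of_mapsTo_ball hgd (hmaps.mono_right ball_subset_closedBall) (by positivity)
    rw [hder.deriv] at hs
    calc ‖fderiv ℂ f z X‖ ≤ 1 / (r / ‖X‖) := hs
      _ = ‖X‖ / r := by field_simp
  obtain ⟨j, hj⟩ : ∃ j, X j ≠ 0 := by
    by_contra h
    push_neg at h
    exact hX (by ext j; simp [h j])
  obtain ⟨R, hR⟩ := hΩb.subset_closedBall z
  have hR0 : 0 ≤ R := by
    have := hR hz
    simpa using this
  set M : ℝ := R + 1 with hM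
  have hM0 : 0 < M := by linarith
  set f : Cn n → ℂ := fun ζ => (M:ℂ)⁻¹ * (ζ j - z j) with hf
  have hfd : DifferentiableOn ℂ f Ω := by
    apply Differentiable.differentiableOn
    exact (((EuclideanSpace.proj (𝕜 := ℂ) j : Cn n →L[ℂ] ℂ).differentiable).sub_const
      (z j)).const_mul ((M:ℂ)⁻¹)
  have hfder : HasFDerivAt f (((M:ℂ)⁻¹ : ℂ) • (EuclideanSpace.proj j : Cn n →L[ℂ] ℂ)) z :=
    (((EuclideanSpace.proj (𝕜 := ℂ) j).hasFDerivAt (x := z)).sub_const (z j)).const_mul _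
  have hderf : fderiv ℂ f z X = (M:ℂ)⁻¹ * X j := by
    rw [hfder.fderiv]; simp
  have hMne : (M:ℂ) ≠ 0 := by
    simp only [ne_eq, Complex.ofReal_eq_zero]
    exact ne_of_gt hM0
  have hpos : (0:ℝ) < ‖(M:ℂ)⁻¹ * X j‖ := by
    rw [norm_mul]
    apply mul_pos _ (norm_pos_iff.mpr hj)
    rw [norm_inv]
    exact inv_pos.mpr (norm_pos_iff.mpr hMne)
  have hmem : ‖fderiv ℂ f z X‖ ∈ {r' | ∃ f : Cn n → ℂ, DifferentiableOn ℂ f Ω ∧ f z = 0 ∧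
      (∀ ζ ∈ Ω, ‖f ζ‖ < 1) ∧ r' = ‖fderiv ℂ f z X‖} := by
    refine ⟨f, hfd, by simp [hf], ?_, rfl⟩
    intro ζ hζ
    have h1 : ‖ζ j - z j‖ ≤ R := by
      calc ‖ζ j - z j‖ = ‖(ζ - z) j‖ := by simp [Pi.sub_apply]
        _ ≤ ‖ζ - z‖ := coord_le_norm _ j
        _ ≤ R := by
            have := hR hζ
            rwa [mem_closedBall, dist_eq_norm] at this
    rw [hf]
    simp only [norm_mul, norm_inv, Complex.norm_real, Real.norm_eq_abs, abs_of_pos hM0]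
    rw [inv_mul_lt_iff₀ hM0, mul_one]
    calc ‖ζ j - z j‖ ≤ R := h1
      _ < M := by rw [hM]; linarith
  have hle := le_csSup hbdd hmem
  rw [hderf] at hle
  exact lt_of_lt_of_le hpos hle

/-- `S_{z,X}^⊥` is 2-dimensional with orthonormal basis
`{b_z, h₁}`, where `h₁ = P_{z,X}(b_z c_{z,X})/‖P_{z,X}(b_z c_{z,X})‖`. -/
theorem stmt_6 {n : ℕ} (Ω : Set (Cn n)) (hΩo : IsOpen Ω) (hΩc : IsConnected Ω)
    (hΩb : Bornology.IsBounded Ω)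
    (K : Cn n → Cn n → ℂ) (hK : IsBergmanKernel Ω K)
    (z : Cn n) (hz : z ∈ Ω) (X : Cn n) (hX : X ≠ 0)
    (c : Cn n → ℂ) (hc : IsCaraExtremal Ω z X c)
    (p : Cn n → ℂ) (hp : IsProj Ω z X (fun ζ => bz K z ζ * c ζ) p) :
    letI h₁ : Cn n → ℂ := fun ζ => p ζ / (L2norm Ω p : ℂ)
    -- b_z and h₁ lie in S_{z,X}^⊥ :
    (∀ h, SzX Ω z X h → (∫ ζ in Ω, h ζ * conj (bz K z ζ)) = 0) ∧
    (∀ h, SzX Ω z X h → (∫ ζ in Ω, h ζ * conj (h₁ ζ)) = 0) ∧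
    -- {b_z, h₁} is orthonormal:
    (∫ ζ in Ω, bz K z ζ * conj (bz K z ζ)) = 1 ∧
    (∫ ζ in Ω, h₁ ζ * conj (h₁ ζ)) = 1 ∧
    (∫ ζ in Ω, bz K z ζ * conj (h₁ ζ)) = 0 ∧
    -- {b_z, h₁} spans S_{z,X}^⊥, so that it has complex dimension 2:
    (∀ f, A2mem Ω f → (∀ h, SzX Ω z X h → (∫ ζ in Ω, f ζ * conj (h ζ)) = 0) →
      ∃ a b : ℂ, ∀ ζ ∈ Ω, f ζ = a * bz K z ζ + b * h₁ ζ) := by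
  beta_reduce
  -- setup
  haveI hfin : IsFiniteMeasure (volume.restrict Ω) :=
    ⟨by rw [Measure.restrict_apply_univ]; exact hΩb.measure_lt_top⟩
  obtain ⟨hKmem, hrep⟩ := hK
  have hKz := hKmem z hz
  have hΩm : MeasurableSet Ω := hΩo.measurableSet
  set t : ℝ := ∫ ζ in Ω, ‖K ζ z‖ ^ 2 with ht
  have ht0 : 0 ≤ t := integral_nonneg (fun x => by positivity)
  have hKzz : K z z = (t : ℂ) := by
    rw [hrep _ hKz z hz]
    calc (∫ ζ in Ω, K ζ z * conj (K ζ z))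
        = ∫ ζ in Ω, ((‖K ζ z‖ ^ 2 : ℝ) : ℂ) := by
          apply integral_congr_ae
          filter_upwards with ζ
          rw [Complex.mul_conj']
          push_cast
          ring
      _ = ((t : ℝ) : ℂ) := integral_ofReal
  have htpos : 0 < t := by
    rcases eq_or_lt_of_le ht0 with h0 | hlt
    · exfalso
      have hKvanish : ∀ ζ ∈ Ω, K ζ z = 0 :=
        zero_on_of_integral_zero hΩo hKz h0.symm
      have h1A2 : A2mem Ω (fun _ => (1:ℂ)) := ⟨differentiableOn_const 1, memLp_const 1⟩
      have hone := hrep _ h1A2 z hz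
      have hzero : (∫ ζ in Ω, (1:ℂ) * conj (K ζ z)) = 0 := by
        rw [← integral_zero]
        apply setIntegral_congr_fun hΩm
        intro ζ hζ
        simp [hKvanish ζ hζ]
      rw [hzero] at hone
      exact one_ne_zero hone
    · exact hlt
  set sk : ℝ := Real.sqrt (K z z).re with hskdef
  have hskr : (K z z).re = t := by rw [hKzz]; simp
  have hsk_eq : sk = Real.sqrt t := by rw [hskdef, hskr]
  have hskpos : 0 < sk := by rw [hsk_eq]; exact Real.sqrt_pos.mpr htpos
  have hskne : (sk : ℂ) ≠ 0 := by
    simp only [ne_eq, Complex.ofReal_eq_zero]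
    exact ne_of_gt hskpos
  have hsq : (sk : ℂ) * (sk : ℂ) = (t : ℂ) := by
    rw [hsk_eq]
    norm_cast
    exact Real.mul_self_sqrt ht0
  have hbz : ∀ ζ, bz K z ζ = K ζ z / (sk : ℂ) := fun ζ => rfl
  have A2bz : A2mem Ω (fun ζ => bz K z ζ) := by
    have e : (fun ζ => bz K z ζ) = fun ζ => ((sk : ℂ))⁻¹ * K ζ z := by
      funext ζ
      rw [hbz, div_eq_inv_mul]
    constructor
    · have hd : DifferentiableOn ℂ (fun ζ => bz K z ζ) Ω := by
        rw [e]
        exact hKz.1.const_mul _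
      exact hd
    · rw [e]
      exact hKz.2.const_mul _
  have hbzz : bz K z z = (sk : ℂ) := by
    rw [hbz, hKzz, ← hsq, mul_div_assoc, div_self hskne, mul_one]
  -- (1) b_z ⟂ S
  have orth1 : ∀ h, SzX Ω z X h → (∫ ζ in Ω, h ζ * conj (bz K z ζ)) = 0 := by
    intro h hS
    have e : (fun ζ => h ζ * conj (bz K z ζ))
        = fun ζ => (h ζ * conj (K ζ z)) / (sk : ℂ) := by
      funext ζ
      rw [hbz, map_div₀, Complex.conj_ofReal]
      ring
    rw [e, integral_div, ← hrep h hS.1 z hz, hS.2.1, zero_div]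
  -- (2) h₁ ⟂ S
  have orth2 : ∀ h, SzX Ω z X h →
      (∫ ζ in Ω, h ζ * conj (p ζ / (L2norm Ω p : ℂ))) = 0 := by
    intro h hS
    have e : (fun ζ => h ζ * conj (p ζ / (L2norm Ω p : ℂ)))
        = fun ζ => (h ζ * conj (p ζ)) / (L2norm Ω p : ℂ) := by
      funext ζ
      rw [map_div₀, Complex.conj_ofReal]
      ring
    rw [e, integral_div, hp.2.1 h hS, zero_div]
  -- (3) ‖b_z‖ = 1
  have norm_bz : (∫ ζ in Ω, bz K z ζ * conj (bz K z ζ)) = 1 := by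
    have e : (fun ζ => bz K z ζ * conj (bz K z ζ))
        = fun ζ => (K ζ z * conj (K ζ z)) / (t : ℂ) := by
      funext ζ
      rw [hbz, map_div₀, Complex.conj_ofReal, div_mul_div_comm, hsq]
    rw [e, integral_div, ← hrep _ hKz z hz, hKzz, div_self]
    simp only [ne_eq, Complex.ofReal_eq_zero]
    exact ne_of_gt htpos
  -- facts about p
  have hpA2 := hp.1
  have hdp : DifferentiableAt ℂ p z := hpA2.1.differentiableAt (hΩo.mem_nhds hz)
  have hdbz : DifferentiableAt ℂ (fun ζ => bz K z ζ) z :=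
    A2bz.1.differentiableAt (hΩo.mem_nhds hz)
  have hdc : DifferentiableAt ℂ c z := hc.1.differentiableAt (hΩo.mem_nhds hz)
  have hgmp := hp.2.2
  have hpz : p z = 0 := by
    have h0 : bz K z z * c z - p z = 0 := hgmp.2.1
    rw [hc.2.1, mul_zero, zero_sub, neg_eq_zero] at h0
    exact h0
  have hcara : 0 < CaraMetric Ω z X := cara_pos hΩo hΩb hz hX
  have hcarane : ((CaraMetric Ω z X : ℝ) : ℂ) ≠ 0 := by
    simp only [ne_eq, Complex.ofReal_eq_zero]
    exact ne_of_gt hcara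
  have hXp : fderiv ℂ p z X = (sk : ℂ) * ((CaraMetric Ω z X : ℝ) : ℂ) := by
    have hdg : DifferentiableAt ℂ (fun ζ => bz K z ζ * c ζ) z := hdbz.mul hdc
    have h0 : fderiv ℂ ((fun ζ => bz K z ζ * c ζ) - p) z X = 0 := hgmp.2.2
    have hsub : fderiv ℂ ((fun ζ => bz K z ζ * c ζ) - p) z
        = fderiv ℂ (fun ζ => bz K z ζ * c ζ) z - fderiv ℂ p z := fderiv_sub hdg hdp
    have hmul : fderiv ℂ (fun ζ => bz K z ζ * c ζ) z
        = bz K z z • fderiv ℂ c z + c z • fderiv ℂ (fun ζ => bz K z ζ) z :=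
      fderiv_mul hdbz hdc
    rw [hsub, ContinuousLinearMap.sub_apply, hmul, ContinuousLinearMap.add_apply,
      ContinuousLinearMap.smul_apply, ContinuousLinearMap.smul_apply, hc.2.1, hbzz,
      hc.2.2.2, zero_smul, add_zero, smul_eq_mul, sub_eq_zero] at h0
    exact h0.symm
  set s : ℝ := ∫ ζ in Ω, ‖p ζ‖ ^ 2 with hs
  have hs0 : 0 ≤ s := integral_nonneg fun x => by positivity
  have hspos : 0 < s := by
    rcases eq_or_lt_of_le hs0 with h0 | hlt
    · exfalso
      have hzero := zero_on_of_integral_zero hΩo hpA2 h0.symm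
      have hev : p =ᶠ[nhds z] (fun _ => (0:ℂ)) := by
        filter_upwards [hΩo.mem_nhds hz] with ζ hζ using hzero ζ hζ
      have hfz : fderiv ℂ p z = 0 := by
        rw [hev.fderiv_eq]
        exact fderiv_const_apply 0
      have hne : (sk:ℂ) * ((CaraMetric Ω z X : ℝ) : ℂ) ≠ 0 := mul_ne_zero hskne hcarane
      apply hne
      rw [← hXp, hfz, ContinuousLinearMap.zero_apply]
    · exact hlt
  have hL2p : L2norm Ω p = Real.sqrt s := rfl
  have hCsq : ((L2norm Ω p : ℝ) : ℂ) * ((L2norm Ω p : ℝ) : ℂ) = (s : ℂ) := by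
    rw [hL2p]
    norm_cast
    exact Real.mul_self_sqrt hs0
  have hCpos : 0 < L2norm Ω p := by rw [hL2p]; exact Real.sqrt_pos.mpr hspos
  have hCne : ((L2norm Ω p : ℝ) : ℂ) ≠ 0 := by
    simp only [ne_eq, Complex.ofReal_eq_zero]
    exact ne_of_gt hCpos
  -- (4) ‖h₁‖ = 1
  have norm_h1 : (∫ ζ in Ω, (p ζ / (L2norm Ω p : ℂ)) * conj (p ζ / (L2norm Ω p : ℂ))) = 1 := by
    have e : (fun ζ => (p ζ / (L2norm Ω p : ℂ)) * conj (p ζ / (L2norm Ω p : ℂ)))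
        = fun ζ => ((‖p ζ‖ ^ 2 : ℝ) : ℂ) / (s : ℂ) := by
      funext ζ
      rw [map_div₀, Complex.conj_ofReal, div_mul_div_comm, hCsq, Complex.mul_conj']
      push_cast
      ring
    have e2 : (∫ ζ in Ω, ((‖p ζ‖ ^ 2 : ℝ) : ℂ)) = ((s : ℝ) : ℂ) := integral_ofReal
    rw [e, integral_div, e2, div_self]
    simp only [ne_eq, Complex.ofReal_eq_zero]
    exact ne_of_gt hspos
  -- (5) b_z ⟂ h₁
  have orth_bz_h1 : (∫ ζ in Ω, bz K z ζ * conj (p ζ / (L2norm Ω p : ℂ))) = 0 := by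
    have e : (fun ζ => bz K z ζ * conj (p ζ / (L2norm Ω p : ℂ)))
        = fun ζ => (bz K z ζ * conj (p ζ)) / (L2norm Ω p : ℂ) := by
      funext ζ
      rw [map_div₀, Complex.conj_ofReal]
      ring
    rw [e, integral_div]
    have hswap := integral_conj_swap (volume.restrict Ω) (fun ζ => bz K z ζ) p
    have hpbz : (∫ ζ in Ω, p ζ * conj (bz K z ζ)) = 0 := by
      have e2 : (fun ζ => p ζ * conj (bz K z ζ))
          = fun ζ => (p ζ * conj (K ζ z)) / (sk : ℂ) := by
        funext ζ
        rw [hbz, map_div₀, Complex.conj_ofReal]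
        ring
      rw [e2, integral_div, ← hrep p hpA2 z hz, hpz, zero_div]
    rw [hswap, hpbz, map_zero, zero_div]
  -- (6) spanning
  refine ⟨orth1, orth2, norm_bz, norm_h1, orth_bz_h1, ?_⟩
  intro f hfA2 hforth
  have hdf : DifferentiableAt ℂ f z := hfA2.1.differentiableAt (hΩo.mem_nhds hz)
  have h1L2 : MemLp (fun ζ => p ζ / (L2norm Ω p : ℂ)) 2 (volume.restrict Ω) := by
    have e : (fun ζ => p ζ / (L2norm Ω p : ℂ)) = fun ζ => ((L2norm Ω p : ℂ))⁻¹ * p ζ :=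
      funext fun ζ => div_eq_inv_mul _ _
    rw [e]
    exact hpA2.2.const_mul _
  have h1diff : DifferentiableOn ℂ (fun ζ => p ζ / (L2norm Ω p : ℂ)) Ω := by
    rw [show (fun ζ => p ζ / (L2norm Ω p : ℂ)) = fun ζ => ((L2norm Ω p : ℂ))⁻¹ * p ζ from
      funext fun ζ => div_eq_inv_mul _ _]
    exact hpA2.1.const_mul _
  have hdh1 : DifferentiableAt ℂ (fun ζ => p ζ / (L2norm Ω p : ℂ)) z :=
    h1diff.differentiableAt (hΩo.mem_nhds hz)
  have hfderiv_h1 : fderiv ℂ (fun ζ => p ζ / (L2norm Ω p : ℂ)) z X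
      = fderiv ℂ p z X / (L2norm Ω p : ℂ) := by
    have e : (fun ζ => p ζ / (L2norm Ω p : ℂ)) = fun ζ => ((L2norm Ω p : ℂ))⁻¹ * p ζ :=
      funext fun ζ => div_eq_inv_mul _ _
    rw [e, fderiv_const_mul hdp, ContinuousLinearMap.smul_apply, smul_eq_mul,
      ← div_eq_inv_mul]
  set γ : ℂ := ((sk : ℂ) * ((CaraMetric Ω z X : ℝ) : ℂ)) / (L2norm Ω p : ℂ) with hγ
  have hγne : γ ≠ 0 := div_ne_zero (mul_ne_zero hskne hcarane) hCne
  have hγ_eq : fderiv ℂ (fun ζ => p ζ / (L2norm Ω p : ℂ)) z X = γ := by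
    rw [hfderiv_h1, hXp, hγ]
  set β : ℂ := fderiv ℂ (fun ζ => bz K z ζ) z X with hβ
  set a : ℂ := f z / (sk : ℂ) with ha
  set b : ℂ := (fderiv ℂ f z X - a * β) / γ with hb
  set r : Cn n → ℂ := fun ζ => f ζ - a * bz K z ζ - b * (p ζ / (L2norm Ω p : ℂ)) with hr
  have hrA2 : A2mem Ω r := by
    constructor
    · exact (hfA2.1.sub (A2bz.1.const_mul a)).sub (h1diff.const_mul b)
    · exact (hfA2.2.sub (A2bz.2.const_mul a)).sub (h1L2.const_mul b)
  have hrz : r z = 0 := by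
    rw [hr]
    simp only [hbzz, hpz, zero_div, mul_zero, sub_zero, ha]
    rw [div_mul_cancel₀ _ hskne, sub_self]
  have hrX : fderiv ℂ r z X = 0 := by
    have e : fderiv ℂ r z = fderiv ℂ f z - a • fderiv ℂ (fun ζ => bz K z ζ) z
        - b • fderiv ℂ (fun ζ => p ζ / (L2norm Ω p : ℂ)) z := by
      rw [hr]
      rw [fderiv_fun_sub (f := fun ζ => f ζ - a * bz K z ζ) (hdf.sub (hdbz.const_mul a)) (hdh1.const_mul b)]
      rw [fderiv_fun_sub hdf (hdbz.const_mul a)]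
      rw [fderiv_const_mul hdbz a, fderiv_const_mul hdh1 b]
    rw [e, ContinuousLinearMap.sub_apply, ContinuousLinearMap.sub_apply,
      ContinuousLinearMap.smul_apply, ContinuousLinearMap.smul_apply, smul_eq_mul,
      smul_eq_mul, hγ_eq, ← hβ, hb]
    rw [div_mul_cancel₀ _ hγne]
    ring
  have hrS : SzX Ω z X r := ⟨hrA2, hrz, hrX⟩
  have i1 : Integrable (fun ζ => f ζ * conj (r ζ)) (volume.restrict Ω) :=
    integrable_mul_conj hfA2.2 hrA2.2
  have i2 : Integrable (fun ζ => bz K z ζ * conj (r ζ)) (volume.restrict Ω) :=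
    integrable_mul_conj A2bz.2 hrA2.2
  have i3 : Integrable (fun ζ => (p ζ / (L2norm Ω p : ℂ)) * conj (r ζ)) (volume.restrict Ω) :=
    integrable_mul_conj h1L2 hrA2.2
  have hsplit : (∫ ζ in Ω, r ζ * conj (r ζ))
      = (∫ ζ in Ω, f ζ * conj (r ζ)) - a * (∫ ζ in Ω, bz K z ζ * conj (r ζ))
        - b * (∫ ζ in Ω, (p ζ / (L2norm Ω p : ℂ)) * conj (r ζ)) := by
    calc (∫ ζ in Ω, r ζ * conj (r ζ))
        = ∫ ζ in Ω, (f ζ * conj (r ζ) - a * (bz K z ζ * conj (r ζ))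
            - b * ((p ζ / (L2norm Ω p : ℂ)) * conj (r ζ))) := by
          apply integral_congr_ae
          filter_upwards with ζ
          rw [hr]
          ring
      _ = (∫ ζ in Ω, (f ζ * conj (r ζ) - a * (bz K z ζ * conj (r ζ))))
            - ∫ ζ in Ω, b * ((p ζ / (L2norm Ω p : ℂ)) * conj (r ζ)) :=
          integral_sub (i1.sub (i2.const_mul a)) (i3.const_mul b)
      _ = (∫ ζ in Ω, f ζ * conj (r ζ)) - a * (∫ ζ in Ω, bz K z ζ * conj (r ζ))
            - b * (∫ ζ in Ω, (p ζ / (L2norm Ω p : ℂ)) * conj (r ζ)) := by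
          rw [integral_sub i1 (i2.const_mul a), integral_const_mul, integral_const_mul]
  have t1 : (∫ ζ in Ω, f ζ * conj (r ζ)) = 0 := hforth r hrS
  have t2 : (∫ ζ in Ω, bz K z ζ * conj (r ζ)) = 0 := by
    rw [integral_conj_swap, orth1 r hrS, map_zero]
  have t3 : (∫ ζ in Ω, (p ζ / (L2norm Ω p : ℂ)) * conj (r ζ)) = 0 := by
    rw [integral_conj_swap, orth2 r hrS, map_zero]
  have hrr : (∫ ζ in Ω, r ζ * conj (r ζ)) = 0 := by
    rw [hsplit, t1, t2, t3]
    ring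
  have hrnorm : (∫ ζ in Ω, ‖r ζ‖ ^ 2) = 0 := by
    have e : (fun ζ => r ζ * conj (r ζ)) = fun ζ => ((‖r ζ‖ ^ 2 : ℝ) : ℂ) := by
      funext ζ
      rw [Complex.mul_conj']
      push_cast
      ring
    have e2 : (∫ ζ in Ω, ((‖r ζ‖ ^ 2 : ℝ) : ℂ)) = ((∫ ζ in Ω, ‖r ζ‖ ^ 2 : ℝ) : ℂ) :=
      integral_ofReal
    rw [e, e2] at hrr
    exact_mod_cast hrr
  have hr0 := zero_on_of_integral_zero hΩo hrA2 hrnorm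
  refine ⟨a, b, fun ζ hζ => ?_⟩
  have := hr0 ζ hζ
  rw [hr] at this
  have h' : f ζ - a * bz K z ζ - b * (p ζ / (L2norm Ω p : ℂ)) = 0 := this
  linear_combination h'
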